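/- An integer-valued random variable ξ satisfies max_{x∈ℤ} P(ξ = x) ≤ 1/2 if and only if its distribution is a countable mixture of unbiased Bernoulli measures, i.e., it can be written as (1/2)·Σᵢ tᵢ(δ_{aᵢ} + δ_{bᵢ}) where tᵢ ≥ 0, Σᵢ tᵢ = 1, and aᵢ ≠ bᵢ are integers for each i. -/

import Mathlib

set_option maxHeartbeats 1000000

open Filter

private lemma clamp_aux {A B c d : ℝ} (hAB : A ≤ B) (hcd : c ≤ d) :
    max 0 (min B d - max A c) = max A (min B d) - max A (min B c) := by
  simp only [max_def, min_def]
  split_ifs <;> linarith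

private lemma hasSum_step {g : ℕ → ℝ} {L : ℝ} (hg : ∀ k, g k ≤ g (k + 1))
    (hlim : Filter.Tendsto g Filter.atTop (nhds L)) :
    HasSum (fun m => g (m + 1) - g m) (L - g 0) := by
  rw [hasSum_iff_tendsto_nat_of_nonneg (fun m => sub_nonneg.2 (hg m))]
  exact ((hlim.sub_const (g 0)).congr fun n => (Finset.sum_range_sub g n).symm)

private noncomputable def eZ : ℕ ≃ ℤ := (Denumerable.eqv ℤ).symm
private noncomputable def qN : ℕ ≃ ℕ × ℕ := (Denumerable.eqv (ℕ × ℕ)).symm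

private noncomputable def Fc (p : ℤ → ℝ) (n : ℕ) : ℝ := ∑ k ∈ Finset.range n, p (eZ k)

private noncomputable def Tc (p : ℤ → ℝ) (n m : ℕ) : ℝ :=
  max 0 (min (Fc p (n + 1)) (Fc p (m + 1) - 1 / 2) - max (Fc p n) (Fc p m - 1 / 2))

private noncomputable def Uc (p : ℤ → ℝ) (nm : ℕ × ℕ) : ℝ := Tc p nm.1 nm.2

private noncomputable def Rc (p : ℤ → ℝ) (n : ℕ) : ℝ :=
  min (Fc p (n + 1)) (1 / 2) - min (Fc p n) (1 / 2)

private noncomputable def Cc (p : ℤ → ℝ) (m : ℕ) : ℝ :=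
  max (Fc p (m + 1)) (1 / 2) - max (Fc p m) (1 / 2)

private noncomputable def clR (p : ℤ → ℝ) (n m : ℕ) : ℝ :=
  max (Fc p n) (min (Fc p (n + 1)) (Fc p m - 1 / 2))

private noncomputable def clC (p : ℤ → ℝ) (m n : ℕ) : ℝ :=
  max (Fc p m - 1 / 2) (min (Fc p (m + 1) - 1 / 2) (Fc p n))

section Aux

variable {p : ℤ → ℝ}

private lemma Fc_succ (n : ℕ) : Fc p (n + 1) = Fc p n + p (eZ n) :=
  Finset.sum_range_succ _ n

private lemma Fc_zero : Fc p 0 = 0 := Finset.sum_range_zero _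

private lemma Fc_step (hp : ∀ x, 0 ≤ p x) (n : ℕ) : Fc p n ≤ Fc p (n + 1) := by
  rw [Fc_succ]; linarith [hp (eZ n)]

private lemma Fc_nonneg (hp : ∀ x, 0 ≤ p x) (n : ℕ) : 0 ≤ Fc p n :=
  Finset.sum_nonneg fun k _ => hp (eZ k)

private lemma Fc_tendsto (hsummable : Summable p) (hsum : ∑' x, p x = 1) :
    Tendsto (Fc p) atTop (nhds 1) := by
  have h1 : HasSum p 1 := hsum ▸ hsummable.hasSum
  have h2 : HasSum (fun n => p (eZ n)) 1 := (Equiv.hasSum_iff eZ).2 h1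
  exact h2.tendsto_sum_nat

private lemma Fc_le_one (hp : ∀ x, 0 ≤ p x) (hsummable : Summable p)
    (hsum : ∑' x, p x = 1) (n : ℕ) : Fc p n ≤ 1 :=
  (monotone_nat_of_le_succ (Fc_step hp)).ge_of_tendsto (Fc_tendsto hsummable hsum) n

private lemma Tc_nonneg (n m : ℕ) : 0 ≤ Tc p n m := le_max_left _ _

private lemma Tc_diag (hp : ∀ x, 0 ≤ p x) (hhalf : ∀ x, p x ≤ 1 / 2) (n : ℕ) :
    Tc p n n = 0 := by
  apply max_eq_left
  have h1 := Fc_succ (p := p) n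
  have h2 := hhalf (eZ n)
  have h3 : min (Fc p (n + 1)) (Fc p (n + 1) - 1 / 2) ≤ Fc p (n + 1) - 1 / 2 :=
    min_le_right _ _
  have h4 : Fc p n ≤ max (Fc p n) (Fc p n - 1 / 2) := le_max_left _ _
  linarith

private lemma hRow (hp : ∀ x, 0 ≤ p x) (hsummable : Summable p) (hsum : ∑' x, p x = 1)
    (n : ℕ) : HasSum (Tc p n) (Rc p n) := by
  have hAB : Fc p n ≤ Fc p (n + 1) := Fc_step hp n
  have hmono : ∀ k, clR p n k ≤ clR p n (k + 1) := by
    intro k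
    exact max_le_max le_rfl (min_le_min le_rfl (by linarith [Fc_step hp k]))
  have hlim : Tendsto (clR p n) atTop
      (nhds (max (Fc p n) (min (Fc p (n + 1)) (1 - 1 / 2)))) := by
    exact tendsto_const_nhds.max (tendsto_const_nhds.min
      ((Fc_tendsto hsummable hsum).sub_const (1 / 2)))
  have h := hasSum_step hmono hlim
  have hfun : (fun m => clR p n (m + 1) - clR p n m) = Tc p n := by
    funext m
    exact (clamp_aux hAB (by linarith [Fc_step hp m])).symm
  rw [hfun] at h
  have hval : max (Fc p n) (min (Fc p (n + 1)) (1 - 1 / 2)) - clR p n 0 = Rc p n := by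
    have h0 : Fc p 0 = 0 := Fc_zero
    have h1 : 0 ≤ Fc p n := Fc_nonneg hp n
    unfold clR Rc
    rw [h0]
    have e1 : min (Fc p (n + 1)) ((0 : ℝ) - 1 / 2) = 0 - 1 / 2 := min_eq_right (by linarith)
    have e2 : max (Fc p n) ((0 : ℝ) - 1 / 2) = Fc p n := max_eq_left (by linarith)
    rw [e1, e2]
    simp only [max_def, min_def]
    split_ifs <;> linarith
  rwa [hval] at h

private lemma hCol (hp : ∀ x, 0 ≤ p x) (hsummable : Summable p) (hsum : ∑' x, p x = 1)
    (m : ℕ) : HasSum (fun n => Tc p n m) (Cc p m) := by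
  have hcd : Fc p m - 1 / 2 ≤ Fc p (m + 1) - 1 / 2 := by linarith [Fc_step hp m]
  have hmono : ∀ k, clC p m k ≤ clC p m (k + 1) := by
    intro k
    exact max_le_max le_rfl (min_le_min le_rfl (Fc_step hp k))
  have hlim : Tendsto (clC p m) atTop
      (nhds (max (Fc p m - 1 / 2) (min (Fc p (m + 1) - 1 / 2) 1))) := by
    exact tendsto_const_nhds.max (tendsto_const_nhds.min (Fc_tendsto hsummable hsum))
  have h := hasSum_step hmono hlim
  have hfun : (fun n => clC p m (n + 1) - clC p m n) = fun n => Tc p n m := by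
    funext n
    have := clamp_aux hcd (Fc_step hp n)
    unfold Tc clC
    rw [min_comm (Fc p (n + 1)), max_comm (Fc p n)]
    exact this.symm
  rw [hfun] at h
  have hval : max (Fc p m - 1 / 2) (min (Fc p (m + 1) - 1 / 2) 1) - clC p m 0 = Cc p m := by
    have h0 : Fc p 0 = 0 := Fc_zero
    have h1 : 0 ≤ Fc p m := Fc_nonneg hp m
    have h2 : Fc p (m + 1) ≤ 1 := Fc_le_one hp hsummable hsum (m + 1)
    unfold clC Cc
    rw [h0]
    have e1 : min (Fc p (m + 1) - 1 / 2) (1 : ℝ) = Fc p (m + 1) - 1 / 2 :=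
      min_eq_left (by linarith)
    rw [e1]
    simp only [max_def, min_def]
    split_ifs <;> linarith
  rwa [hval] at h

private lemma hRsum (hp : ∀ x, 0 ≤ p x) (hsummable : Summable p) (hsum : ∑' x, p x = 1) :
    HasSum (Rc p) (1 / 2) := by
  have hmono : ∀ k, min (Fc p k) (1 / 2) ≤ min (Fc p (k + 1)) (1 / 2) :=
    fun k => min_le_min (Fc_step hp k) le_rfl
  have hlim : Tendsto (fun k => min (Fc p k) (1 / 2)) atTop (nhds (min 1 (1 / 2))) :=
    (Fc_tendsto hsummable hsum).min tendsto_const_nhds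
  have h := hasSum_step hmono hlim
  have hval : min (1 : ℝ) (1 / 2) - min (Fc p 0) (1 / 2) = 1 / 2 := by
    rw [Fc_zero]; norm_num
  rwa [hval] at h

private lemma hRC (hp : ∀ x, 0 ≤ p x) (n : ℕ) : Rc p n + Cc p n = p (eZ n) := by
  have h1 := Fc_succ (p := p) n
  unfold Rc Cc
  simp only [max_def, min_def]
  split_ifs <;> linarith

private lemma hUsummable (hp : ∀ x, 0 ≤ p x) (hsummable : Summable p)
    (hsum : ∑' x, p x = 1) : Summable (Uc p) := by
  refine (summable_prod_of_nonneg fun nm => Tc_nonneg nm.1 nm.2).2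
    ⟨fun n => (hRow hp hsummable hsum n).summable, ?_⟩
  exact (summable_congr fun n => (hRow hp hsummable hsum n).tsum_eq).2
    (hRsum hp hsummable hsum).summable

private lemma hUsum (hp : ∀ x, 0 ≤ p x) (hsummable : Summable p) (hsum : ∑' x, p x = 1) :
    HasSum (Uc p) (1 / 2) := by
  have h1 := (hUsummable hp hsummable hsum).hasSum
  have h2 : HasSum (Rc p) (∑' nm, Uc p nm) :=
    h1.prod_fiberwise fun n => hRow hp hsummable hsum n
  have h3 : (1 : ℝ) / 2 = ∑' nm, Uc p nm := (hRsum hp hsummable hsum).unique h2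
  rwa [h3]

end Aux

/-- An integer-valued distribution has all atoms at most 1/2 iff it is a countable
mixture of unbiased Bernoulli measures. -/
theorem stmt1 (p : ℤ → ℝ) (hp : ∀ x, 0 ≤ p x) (hsummable : Summable p)
    (hsum : ∑' x, p x = 1) :
    (∀ x, p x ≤ 1 / 2) ↔
    ∃ (t : ℕ → ℝ) (a b : ℕ → ℤ),
      (∀ i, 0 ≤ t i) ∧ (∑' i, t i) = 1 ∧ (∀ i, a i ≠ b i) ∧
      ∀ x, p x = (1/2) * ∑' i, t i *
        ((if x = a i then (1:ℝ) else 0) + (if x = b i then 1 else 0)) := by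
  constructor
  · intro hhalf
    refine ⟨fun i => 2 * Tc p (qN i).1 (qN i).2,
      fun i => if (qN i).1 = (qN i).2 then 0 else eZ (qN i).1,
      fun i => if (qN i).1 = (qN i).2 then 1 else eZ (qN i).2,
      fun i => mul_nonneg (by norm_num) (Tc_nonneg _ _), ?_, ?_, ?_⟩
    · have h : HasSum (fun nm : ℕ × ℕ => 2 * Uc p nm) 1 := by
        have h2 := (hUsum hp hsummable hsum).mul_left 2
        norm_num at h2
        exact h2
      exact ((qN.hasSum_iff).2 h).tsum_eq
    · intro i
      by_cases h : (qN i).1 = (qN i).2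
      · simp [h]
      · simp only [if_neg h]
        exact fun hc => h (eZ.injective hc)
    · intro x
      set n₀ := eZ.symm x with hn₀
      have hx : eZ n₀ = x := eZ.apply_symm_apply x
      -- first fiber sum
      have hs1 : Summable (fun nm : ℕ × ℕ => if x = eZ nm.1 then Uc p nm else 0) := by
        refine Summable.of_nonneg_of_le (fun nm => ?_) (fun nm => ?_)
          (hUsummable hp hsummable hsum)
        · split_ifs
          · exact Tc_nonneg _ _
          · exact le_rfl
        · split_ifs
          · exact le_rfl
          · exact Tc_nonneg _ _
      have hrow1 : ∀ n, HasSum (fun m => if x = eZ n then Uc p (n, m) else 0)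
          (if x = eZ n then Rc p n else 0) := by
        intro n
        by_cases h : x = eZ n
        · simp only [if_pos h]; exact hRow hp hsummable hsum n
        · simp only [if_neg h]; exact hasSum_zero
      have h2 := hs1.hasSum.prod_fiberwise hrow1
      have h3 : HasSum (fun n => if x = eZ n then Rc p n else 0) (Rc p n₀) := by
        have h4 := hasSum_single (f := fun n => if x = eZ n then Rc p n else 0) n₀
          (fun n' hn' => if_neg fun hc => hn' (eZ.injective (hx.trans hc)).symm)
        have h5 : (fun n => if x = eZ n then Rc p n else 0) n₀ = Rc p n₀ := by
          simp only []
          rw [if_pos hx.symm]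
        rwa [if_pos hx.symm] at h4
      have hf1 : HasSum (fun nm : ℕ × ℕ => if x = eZ nm.1 then Uc p nm else 0) (Rc p n₀) := by
        rw [h3.unique h2]; exact hs1.hasSum
      -- second fiber sum, via swap
      have hsw : Summable ((Uc p) ∘ (Equiv.prodComm ℕ ℕ)) :=
        (Equiv.prodComm ℕ ℕ).summable_iff.2 (hUsummable hp hsummable hsum)
      have hs2 : Summable (fun mn : ℕ × ℕ => if x = eZ mn.1 then Uc p (mn.2, mn.1) else 0) := by
        refine Summable.of_nonneg_of_le (fun nm => ?_) (fun nm => ?_) hsw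
        · split_ifs
          · exact Tc_nonneg _ _
          · exact le_rfl
        · split_ifs
          · exact le_rfl
          · exact Tc_nonneg _ _
      have hrow2 : ∀ m, HasSum (fun n => if x = eZ m then Uc p (n, m) else 0)
          (if x = eZ m then Cc p m else 0) := by
        intro m
        by_cases h : x = eZ m
        · simp only [if_pos h]; exact hCol hp hsummable hsum m
        · simp only [if_neg h]; exact hasSum_zero
      have h2' := hs2.hasSum.prod_fiberwise hrow2
      have h3' : HasSum (fun m => if x = eZ m then Cc p m else 0) (Cc p n₀) := by
        have h4 := hasSum_single (f := fun m => if x = eZ m then Cc p m else 0) n₀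
          (fun n' hn' => if_neg fun hc => hn' (eZ.injective (hx.trans hc)).symm)
        have h5 : (fun m => if x = eZ m then Cc p m else 0) n₀ = Cc p n₀ := by
          simp only []
          rw [if_pos hx.symm]
        rwa [if_pos hx.symm] at h4
      have hf2' : HasSum (fun mn : ℕ × ℕ => if x = eZ mn.1 then Uc p (mn.2, mn.1) else 0)
          (Cc p n₀) := by
        rw [h3'.unique h2']; exact hs2.hasSum
      have hf2 : HasSum (fun nm : ℕ × ℕ => if x = eZ nm.2 then Uc p nm else 0) (Cc p n₀) :=
        (Equiv.prodComm ℕ ℕ).hasSum_iff.1 hf2'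
      -- combine
      have hadd : HasSum (fun nm : ℕ × ℕ =>
          (if x = eZ nm.1 then Uc p nm else 0) + (if x = eZ nm.2 then Uc p nm else 0))
          (p x) := by
        have hv : Rc p n₀ + Cc p n₀ = p x := by rw [← hx]; exact hRC hp n₀
        rw [← hv]
        exact hf1.add hf2
      have hkey : (fun nm : ℕ × ℕ => 2 * Tc p nm.1 nm.2 *
          ((if x = (if nm.1 = nm.2 then 0 else eZ nm.1) then (1 : ℝ) else 0) +
           (if x = (if nm.1 = nm.2 then 1 else eZ nm.2) then 1 else 0))) =
          fun nm : ℕ × ℕ => 2 * ((if x = eZ nm.1 then Uc p nm else 0) +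
            (if x = eZ nm.2 then Uc p nm else 0)) := by
        funext nm
        obtain ⟨n, m⟩ := nm
        by_cases h : n = m
        · subst h
          simp [Uc, Tc_diag hp hhalf n]
        · simp only [if_neg h, Uc]
          by_cases h1 : x = eZ n <;> by_cases h2 : x = eZ m <;>
            simp [h1, h2, h, Ne.symm h] <;> ring
      have hG : HasSum (fun nm : ℕ × ℕ => 2 * Tc p nm.1 nm.2 *
          ((if x = (if nm.1 = nm.2 then 0 else eZ nm.1) then (1 : ℝ) else 0) +
           (if x = (if nm.1 = nm.2 then 1 else eZ nm.2) then 1 else 0))) (2 * p x) := by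
        rw [hkey]
        exact hadd.mul_left 2
      have hfinal : HasSum (fun i => (2 * Tc p (qN i).1 (qN i).2) *
          ((if x = (if (qN i).1 = (qN i).2 then 0 else eZ (qN i).1) then (1 : ℝ) else 0) +
           (if x = (if (qN i).1 = (qN i).2 then 1 else eZ (qN i).2) then 1 else 0)))
          (2 * p x) := (Equiv.hasSum_iff qN).2 hG
      rw [hfinal.tsum_eq]
      ring
  · rintro ⟨t, a, b, ht0, htsum, hab, hrep⟩ x
    have htsummable : Summable t := by
      by_contra h
      rw [tsum_eq_zero_of_not_summable h] at htsum
      norm_num at htsum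
    have hle : ∀ i, t i * ((if x = a i then (1 : ℝ) else 0) + (if x = b i then 1 else 0))
        ≤ t i := by
      intro i
      have hind : ((if x = a i then (1 : ℝ) else 0) + (if x = b i then 1 else 0)) ≤ 1 := by
        by_cases h1 : x = a i
        · have h2 : ¬(x = b i) := fun h2 => hab i (h1.symm.trans h2)
          simp [h1, h2, hab i, Ne.symm (hab i)]
        · by_cases h2 : x = b i <;> simp [h1, h2, hab i, Ne.symm (hab i)]
      nlinarith [ht0 i]
    have hnn : ∀ i, 0 ≤ t i * ((if x = a i then (1 : ℝ) else 0) + (if x = b i then 1 else 0)) := by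
      intro i
      apply mul_nonneg (ht0 i)
      have hA : (0 : ℝ) ≤ (if x = a i then (1 : ℝ) else 0) := by split_ifs <;> norm_num
      have hB : (0 : ℝ) ≤ (if x = b i then (1 : ℝ) else 0) := by split_ifs <;> norm_num
      linarith
    have hsummable2 : Summable (fun i => t i *
        ((if x = a i then (1 : ℝ) else 0) + (if x = b i then 1 else 0))) :=
      Summable.of_nonneg_of_le hnn hle htsummable
    have hbound := Summable.tsum_le_tsum hle hsummable2 htsummable
    rw [htsum] at hbound
    rw [hrep x]
    linarith
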